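/- For μ = 1 and γ² > ω (with ω = s_1+1 > 2), one has λ_−(ν̄_±) < 0 where ν̄_± = γ ± √(γ²−ω) and λ_−(ν) = ν² + ω − √(4γ²ν² + 2ω); consequently the interval (ν̄_−, ν̄_+) is contained in (ν_−, ν_+), and the Morse index of m_1(ν) equals 2 for ν ∈ (ν̄_−, ν̄_+), equals 1 for ν ∈ (ν_−, ν̄_−) ∪ (ν̄_+, ν_+), and equals 0 for ν ∈ [0, ν_−) ∪ (ν_+, ∞). -/

import Mathlib

open Matrix Complex

/-- The 3×3 Fourier block `m₁(ν)` of the filament problem with `μ = 1`,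
`ω = s₁ + 1`, `n = 2s₁ + 1`. -/
noncomputable def m₁F (n s₁ γ ν : ℝ) : Matrix (Fin 3) (Fin 3) ℂ :=
  !![(ν ^ 2 - 2 * γ * ν + (s₁ + 1) : ℝ), (-Real.sqrt (n / 2) : ℝ), -(Real.sqrt (n / 2) : ℂ) * Complex.I;
     (-Real.sqrt (n / 2) : ℝ), (ν ^ 2 + s₁ + 2 : ℝ), 2 * γ * ν * Complex.I;
     (Real.sqrt (n / 2) : ℂ) * Complex.I, -(2 * γ * ν * Complex.I), (ν ^ 2 + s₁ : ℝ)]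

/-- `λ₋(ν) = ν² + ω − √(4γ²ν² + 2ω)`. -/
noncomputable def lamM (ω γ ν : ℝ) : ℝ := ν ^ 2 + ω - Real.sqrt (4 * γ ^ 2 * ν ^ 2 + 2 * ω)

/-- Morse index: the number of negative eigenvalues (with multiplicity) of a
Hermitian matrix (and `0` for non-Hermitian matrices). -/
noncomputable def morseIndex {m : ℕ} (A : Matrix (Fin m) (Fin m) ℂ) : ℕ :=
  if h : A.IsHermitian then (Finset.univ.filter fun i => h.eigenvalues i < 0).card else 0

open Polynomial
lemma det_sub_smul_one_eq_prod {k : ℕ} (A : Matrix (Fin k) (Fin k) ℂ)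
    (hA : A.IsHermitian) (μ : ℝ) :
    (A - (μ : ℂ) • 1).det = ∏ i, ((hA.eigenvalues i : ℂ) - (μ : ℂ)) := by
  have hU1 : (hA.eigenvectorUnitary : Matrix (Fin k) (Fin k) ℂ) *
      star (hA.eigenvectorUnitary : Matrix (Fin k) (Fin k) ℂ) = 1 :=
    (Matrix.mem_unitaryGroup_iff).mp hA.eigenvectorUnitary.2
  set U : Matrix (Fin k) (Fin k) ℂ := (hA.eigenvectorUnitary : Matrix (Fin k) (Fin k) ℂ) with hUdef
  have hdg : diagonal (fun i => (hA.eigenvalues i : ℂ) - μ)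
      = diagonal (RCLike.ofReal ∘ hA.eigenvalues) - (μ:ℂ) • 1 := by
    rw [smul_one_eq_diagonal, ← diagonal_sub]
    rfl
  have key : A - (μ:ℂ) • 1 = U * diagonal (fun i => (hA.eigenvalues i : ℂ) - μ) * star U := by
    rw [hdg, Matrix.mul_sub, Matrix.sub_mul, Matrix.mul_smul, Matrix.smul_mul, Matrix.mul_one, hU1]
    exact congrArg (· - (μ:ℂ) • 1) hA.spectral_theorem
  have hU2 : star U * U = 1 := (Matrix.mem_unitaryGroup_iff').mp hA.eigenvectorUnitary.2
  rw [key, det_mul, det_mul, mul_comm, ← mul_assoc, ← det_mul, hU2, det_one, one_mul,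
    det_diagonal]

lemma eig_multiset {f : Fin 3 → ℝ} {a b c : ℝ}
    (h : ∀ x : ℝ, ∏ i, (x - f i) = (x - a) * (x - b) * (x - c)) :
    (Finset.univ.val.map f) = ({a, b, c} : Multiset ℝ) := by
  have hP : ((Finset.univ.val.map f).map fun r => (X : ℝ[X]) - C r).prod
      = (({a, b, c} : Multiset ℝ).map fun r => (X : ℝ[X]) - C r).prod := by
    apply Polynomial.funext
    intro x
    rw [Polynomial.eval_multiset_prod, Polynomial.eval_multiset_prod]
    simp only [Multiset.map_map, Function.comp, Polynomial.eval_sub, Polynomial.eval_X,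
      Polynomial.eval_C, Multiset.insert_eq_cons, Multiset.map_cons, Multiset.map_singleton,
      Multiset.prod_cons, Multiset.prod_singleton]
    rw [← Finset.prod_eq_multiset_prod, h x]
    ring
  have := congrArg Polynomial.roots hP
  rwa [Polynomial.roots_multiset_prod_X_sub_C, Polynomial.roots_multiset_prod_X_sub_C] at this

lemma morseIndex_eq_count {A : Matrix (Fin 3) (Fin 3) ℂ} (hA : A.IsHermitian) {a b c : ℝ}
    (hdet : ∀ μ : ℝ, (A - (μ : ℂ) • 1).det = (((a - μ) * (b - μ) * (c - μ) : ℝ) : ℂ)) :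
    morseIndex A = (if a < 0 then 1 else 0) + (if b < 0 then 1 else 0)
      + (if c < 0 then 1 else 0) := by
  classical
  have hm : (Finset.univ.val.map hA.eigenvalues) = ({a, b, c} : Multiset ℝ) := by
    apply eig_multiset
    intro x
    have h1 := det_sub_smul_one_eq_prod A hA x
    rw [hdet x] at h1
    have h2 : (∏ i, (hA.eigenvalues i - x)) = (a - x) * (b - x) * (c - x) := by
      have := h1.symm
      push_cast at this
      exact_mod_cast this
    have h3 : (∏ i : Fin 3, (x - hA.eigenvalues i)) = -∏ i : Fin 3, (hA.eigenvalues i - x) := by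
      simp [Fin.prod_univ_three]; ring
    rw [h3, h2]; ring
  rw [morseIndex, dif_pos hA]
  have : (Finset.univ.filter fun i => hA.eigenvalues i < 0).card
      = Multiset.countP (fun r : ℝ => r < 0) (Finset.univ.val.map hA.eigenvalues) := by
    rw [Multiset.countP_map]
    rfl
  rw [this, hm]
  have hsing : ({c} : Multiset ℝ) = c ::ₘ 0 := rfl
  simp only [Multiset.insert_eq_cons, hsing, Multiset.countP_cons, Multiset.countP_zero]
  split_ifs <;> ring

lemma m1F_herm (n s₁ γ ν : ℝ) : (m₁F n s₁ γ ν).IsHermitian := by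
  show (m₁F n s₁ γ ν)ᴴ = m₁F n s₁ γ ν
  ext i j
  fin_cases i <;> fin_cases j <;>
    simp [m₁F, Matrix.conjTranspose_apply, Complex.ext_iff]

lemma m1F_det (n : ℕ) (s₁ γ ν : ℝ) (hs : (n:ℝ) = 2*s₁+1) (μ : ℝ) :
    ((m₁F n s₁ γ ν) - (μ:ℂ) • 1).det =
      (((ν ^ 2 - 2 * γ * ν + (s₁ + 1) - μ)
        * (ν ^ 2 + (s₁ + 1) + Real.sqrt (4 * γ ^ 2 * ν ^ 2 + 2 * (s₁ + 1)) - μ)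
        * (lamM (s₁ + 1) γ ν - μ) : ℝ) : ℂ) := by
  have h0 : (0:ℝ) ≤ (n:ℝ)/2 := by positivity
  have h1 : (0:ℝ) ≤ 4 * γ ^ 2 * ν ^ 2 + 2 * (s₁ + 1) := by
    rw [show s₁ + 1 = ((n:ℝ) + 1)/2 by rw [hs]; ring]; positivity
  have hr : Real.sqrt ((n:ℝ)/2) ^ 2 = s₁ + 1/2 := by
    rw [Real.sq_sqrt h0, hs]; ring
  have hR : Real.sqrt (4 * γ ^ 2 * ν ^ 2 + 2 * (s₁ + 1)) ^ 2
      = 4 * γ ^ 2 * ν ^ 2 + 2 * (s₁ + 1) := Real.sq_sqrt h1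
  rw [lamM]
  set r := Real.sqrt ((n:ℝ)/2) with hrdef
  set R := Real.sqrt (4 * γ ^ 2 * ν ^ 2 + 2 * (s₁ + 1)) with hRdef
  have hrC : (r:ℂ) ^ 2 = (s₁:ℂ) + 1/2 := by
    have := congrArg Complex.ofReal hr; push_cast at this; exact this
  have hRC : (R:ℂ) ^ 2 = 4 * (γ:ℂ) ^ 2 * (ν:ℂ) ^ 2 + 2 * ((s₁:ℂ) + 1) := by
    have := congrArg Complex.ofReal hR; push_cast at this; exact this
  simp only [m₁F, Matrix.det_fin_three, Matrix.sub_apply, Matrix.smul_apply,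
    Matrix.one_fin_three, Matrix.cons_val', Matrix.cons_val_zero, Matrix.cons_val_one,
    Matrix.head_cons, Matrix.head_fin_const, Matrix.empty_val', Matrix.cons_val_fin_one,
    Matrix.cons_val_two, Matrix.tail_cons, Matrix.of_apply, smul_eq_mul]
  push_cast
  linear_combination (((ν:ℂ) ^ 2 - 2*γ*ν + (s₁+1) - μ) * (2*(γ:ℂ)*ν)^2 - 2*(2*(γ:ℂ)*ν)*(r:ℂ)^2
      + ((ν:ℂ)^2 + s₁ + 2 - μ) * (r:ℂ)^2) * Complex.I_sq
    + (2*(2*(γ:ℂ)*ν) - ((ν:ℂ)^2+s₁+2-μ) - ((ν:ℂ)^2+s₁-μ)) * hrC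
    + ((ν:ℂ) ^ 2 - 2*γ*ν + (s₁+1) - μ) * hRC

set_option maxHeartbeats 1000000 in
theorem morse_index_m1_filament_mu_one (n : ℕ) (hn : 3 ≤ n) (s₁ γ : ℝ)
    (hs : (n : ℝ) = 2 * s₁ + 1) (hω : 2 < s₁ + 1) (hγpos : 0 < γ)
    (hγ : γ ^ 2 > s₁ + 1) :
    let ω : ℝ := s₁ + 1
    let b : ℝ := ω - 2 * γ ^ 2
    let c : ℝ := ω ^ 2 - 2 * ω
    let νbarM : ℝ := γ - Real.sqrt (γ ^ 2 - ω)
    let νbarP : ℝ := γ + Real.sqrt (γ ^ 2 - ω)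
    let νM : ℝ := Real.sqrt (-b - Real.sqrt (b ^ 2 - c))
    let νP : ℝ := Real.sqrt (-b + Real.sqrt (b ^ 2 - c))
    lamM ω γ νbarM < 0 ∧ lamM ω γ νbarP < 0 ∧
    Set.Ioo νbarM νbarP ⊆ Set.Ioo νM νP ∧
    (∀ ν ∈ Set.Ioo νbarM νbarP, morseIndex (m₁F n s₁ γ ν) = 2) ∧
    (∀ ν ∈ Set.Ioo νM νbarM ∪ Set.Ioo νbarP νP, morseIndex (m₁F n s₁ γ ν) = 1) ∧
    (∀ ν ∈ Set.Ico (0 : ℝ) νM ∪ Set.Ioi νP, morseIndex (m₁F n s₁ γ ν) = 0) := by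
  intro ω b c νbarM νbarP νM νP
  have hωd : ω = s₁ + 1 := rfl
  have hbd : b = ω - 2 * γ ^ 2 := rfl
  have hcd : c = ω ^ 2 - 2 * ω := rfl
  have hbarMd : νbarM = γ - Real.sqrt (γ ^ 2 - ω) := rfl
  have hbarPd : νbarP = γ + Real.sqrt (γ ^ 2 - ω) := rfl
  have hνMd : νM = Real.sqrt (-b - Real.sqrt (b ^ 2 - c)) := rfl
  have hνPd : νP = Real.sqrt (-b + Real.sqrt (b ^ 2 - c)) := rfl
  clear_value ω b c νbarM νbarP νM νP
  have hω2 : (2:ℝ) < ω := by rw [hωd]; exact hω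
  have hγω : ω < γ ^ 2 := by rw [hωd]; exact hγ
  have hD : (0:ℝ) < γ ^ 2 - ω := by linarith
  have hsD2 : Real.sqrt (γ ^ 2 - ω) ^ 2 = γ ^ 2 - ω := Real.sq_sqrt hD.le
  have hsD0 : 0 < Real.sqrt (γ ^ 2 - ω) := Real.sqrt_pos.mpr hD
  have hsDγ : Real.sqrt (γ ^ 2 - ω) < γ := by nlinarith
  have hbarM0 : 0 < νbarM := by rw [hbarMd]; linarith
  have hbarP0 : 0 < νbarP := by rw [hbarPd]; linarith
  have hbarMP : νbarM < νbarP := by rw [hbarMd, hbarPd]; linarith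
  have hc0 : 0 < c := by rw [hcd]; nlinarith
  have hbneg : 0 < -b := by rw [hbd]; nlinarith
  have hbc : 0 < b ^ 2 - c := by rw [hbd, hcd]; nlinarith
  have hs2 : Real.sqrt (b ^ 2 - c) ^ 2 = b ^ 2 - c := Real.sq_sqrt hbc.le
  have hs0 : 0 < Real.sqrt (b ^ 2 - c) := Real.sqrt_pos.mpr hbc
  have hsb : Real.sqrt (b ^ 2 - c) < -b := by
    rw [Real.sqrt_lt' hbneg]; nlinarith [hc0]
  have htM : (0:ℝ) < -b - Real.sqrt (b ^ 2 - c) := by linarith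
  have htP : (0:ℝ) < -b + Real.sqrt (b ^ 2 - c) := by linarith
  have hνM2 : νM ^ 2 = -b - Real.sqrt (b ^ 2 - c) := by rw [hνMd]; exact Real.sq_sqrt htM.le
  have hνP2 : νP ^ 2 = -b + Real.sqrt (b ^ 2 - c) := by rw [hνPd]; exact Real.sq_sqrt htP.le
  have hνM0 : 0 < νM := by rw [hνMd]; exact Real.sqrt_pos.mpr htM
  have hνP0 : 0 < νP := by rw [hνPd]; exact Real.sqrt_pos.mpr htP
  have hνMP : νM < νP := by rw [hνMd, hνPd]; exact Real.sqrt_lt_sqrt htM.le (by linarith)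
  -- quadratic identity
  have hq : ∀ x : ℝ, (x ^ 2 + ω) ^ 2 - (4 * γ ^ 2 * x ^ 2 + 2 * ω)
      = (x ^ 2 - νM ^ 2) * (x ^ 2 - νP ^ 2) := by
    intro x
    rw [hνM2, hνP2]
    linear_combination hs2 - 2 * x ^ 2 * hbd - hcd
  have hsqnn : ∀ x : ℝ, (0:ℝ) ≤ x ^ 2 + ω := fun x => by nlinarith [sq_nonneg x]
  have lam_neg_iff : ∀ x : ℝ, (lamM ω γ x < 0 ↔ (x ^ 2 - νM ^ 2) * (x ^ 2 - νP ^ 2) < 0) := by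
    intro x
    rw [lamM, sub_neg, Real.lt_sqrt (hsqnn x), ← sub_neg, hq x]
  have lam_pos_iff : ∀ x : ℝ, (0 < lamM ω γ x ↔ 0 < (x ^ 2 - νM ^ 2) * (x ^ 2 - νP ^ 2)) := by
    intro x
    rw [lamM, sub_pos, Real.sqrt_lt' (by nlinarith [sq_nonneg x]), ← sub_pos, hq x]
  -- λ₀ factorization
  have hl0 : ∀ x : ℝ, x ^ 2 - 2 * γ * x + ω = (x - νbarM) * (x - νbarP) := by
    intro x
    linear_combination hsD2 + (x - νbarP) * hbarMd + (x - (γ - Real.sqrt (γ ^ 2 - ω))) * hbarPd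
  -- endpoint facts
  have hbar_eqM : νbarM ^ 2 + ω = 2 * γ * νbarM := by
    linear_combination hsD2 + (νbarM - γ - Real.sqrt (γ ^ 2 - ω)) * hbarMd
  have hbar_eqP : νbarP ^ 2 + ω = 2 * γ * νbarP := by
    linear_combination hsD2 + (νbarP + γ + Real.sqrt (γ ^ 2 - ω) - 2 * γ) * hbarPd
  have hlam_barM : lamM ω γ νbarM < 0 := by
    rw [lamM]
    have h2 : (2 * γ * νbarM) < Real.sqrt (4 * γ ^ 2 * νbarM ^ 2 + 2 * ω) :=
      (Real.lt_sqrt (by nlinarith [hγpos, hbarM0])).mpr (by nlinarith [hω2])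
    linarith
  have hlam_barP : lamM ω γ νbarP < 0 := by
    rw [lamM]
    have h2 : (2 * γ * νbarP) < Real.sqrt (4 * γ ^ 2 * νbarP ^ 2 + 2 * ω) :=
      (Real.lt_sqrt (by nlinarith [hγpos, hbarP0])).mpr (by nlinarith [hω2])
    linarith
  -- ordering νM < νbarM, νbarP < νP
  have hprodM := (lam_neg_iff νbarM).mp hlam_barM
  have hprodP := (lam_neg_iff νbarP).mp hlam_barP
  have hsq_lt : νM ^ 2 < νP ^ 2 := by rw [hνM2, hνP2]; linarith
  have hMbarM : νM < νbarM := by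
    by_contra hcon
    push_neg at hcon
    have h1 : νbarM ^ 2 ≤ νM ^ 2 := pow_le_pow_left₀ hbarM0.le hcon 2
    have h3 : 0 ≤ (νM ^ 2 - νbarM ^ 2) * (νP ^ 2 - νbarM ^ 2) :=
      mul_nonneg (by linarith) (by linarith)
    have h4 : (νbarM ^ 2 - νM ^ 2) * (νbarM ^ 2 - νP ^ 2)
        = (νM ^ 2 - νbarM ^ 2) * (νP ^ 2 - νbarM ^ 2) := by ring
    linarith [hprodM, h3]
  have hbarP_P : νbarP < νP := by
    by_contra hcon
    push_neg at hcon
    have h1 : νP ^ 2 ≤ νbarP ^ 2 := pow_le_pow_left₀ hνP0.le hcon 2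
    have h3 : 0 ≤ (νbarP ^ 2 - νM ^ 2) * (νbarP ^ 2 - νP ^ 2) :=
      mul_nonneg (by linarith) (by linarith)
    linarith [hprodP, h3]
  have hdet' : ∀ x μ : ℝ, ((m₁F n s₁ γ x) - (μ:ℂ) • 1).det =
      (((x ^ 2 - 2 * γ * x + ω - μ)
        * (x ^ 2 + ω + Real.sqrt (4 * γ ^ 2 * x ^ 2 + 2 * ω) - μ)
        * (lamM ω γ x - μ) : ℝ) : ℂ) := by
    intro x μ
    rw [hωd]
    exact m1F_det n s₁ γ x hs μ
  have hcount : ∀ x : ℝ, morseIndex (m₁F n s₁ γ x)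
      = (if x ^ 2 - 2 * γ * x + ω < 0 then 1 else 0)
        + (if x ^ 2 + ω + Real.sqrt (4 * γ ^ 2 * x ^ 2 + 2 * ω) < 0 then 1 else 0)
        + (if lamM ω γ x < 0 then 1 else 0) :=
    fun x => morseIndex_eq_count (m1F_herm (n : ℝ) s₁ γ x) (hdet' x)
  have hBnot : ∀ x : ℝ, ¬ (x ^ 2 + ω + Real.sqrt (4 * γ ^ 2 * x ^ 2 + 2 * ω) < 0) := by
    intro x
    have h1 := Real.sqrt_nonneg (4 * γ ^ 2 * x ^ 2 + 2 * ω)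
    have h2 := sq_nonneg x
    exact not_lt.mpr (by linarith)
  refine ⟨hlam_barM, hlam_barP, ?_, ?_, ?_, ?_⟩
  · intro x hx
    exact ⟨by linarith [hx.1], by linarith [hx.2, hbarMP]⟩
  · -- index 2 on (νbarM, νbarP)
    intro ν hν
    obtain ⟨h1, h2⟩ := hν
    have hν0 : 0 < ν := by linarith
    have hA : ν ^ 2 - 2 * γ * ν + ω < 0 := by
      rw [hl0 ν]; exact mul_neg_of_pos_of_neg (by linarith) (by linarith)
    have e1 : νM ^ 2 < ν ^ 2 := pow_lt_pow_left₀ (by linarith) hνM0.le two_ne_zero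
    have e2 : ν ^ 2 < νP ^ 2 := pow_lt_pow_left₀ (by linarith) hν0.le two_ne_zero
    have hC : lamM ω γ ν < 0 :=
      (lam_neg_iff ν).mpr (mul_neg_of_pos_of_neg (by linarith) (by linarith))
    rw [hcount ν, if_pos hA, if_neg (hBnot ν), if_pos hC]
  · -- index 1
    intro ν hν
    rcases hν with hν | hν <;> obtain ⟨h1, h2⟩ := hν
    · have hν0 : 0 < ν := by linarith
      have hA : 0 < ν ^ 2 - 2 * γ * ν + ω := by
        rw [hl0 ν]; exact mul_pos_of_neg_of_neg (by linarith) (by linarith)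
      have e1 : νM ^ 2 < ν ^ 2 := pow_lt_pow_left₀ h1 hνM0.le two_ne_zero
      have e2 : ν ^ 2 < νP ^ 2 := pow_lt_pow_left₀ (by linarith) hν0.le two_ne_zero
      have hC : lamM ω γ ν < 0 :=
        (lam_neg_iff ν).mpr (mul_neg_of_pos_of_neg (by linarith) (by linarith))
      rw [hcount ν, if_neg (not_lt.mpr hA.le), if_neg (hBnot ν), if_pos hC]
    · have hν0 : 0 < ν := by linarith
      have hA : 0 < ν ^ 2 - 2 * γ * ν + ω := by
        rw [hl0 ν]; exact mul_pos (by linarith [hbarMP]) (by linarith)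
      have e1 : νM ^ 2 < ν ^ 2 := pow_lt_pow_left₀ (by linarith) hνM0.le two_ne_zero
      have e2 : ν ^ 2 < νP ^ 2 := pow_lt_pow_left₀ h2 hν0.le two_ne_zero
      have hC : lamM ω γ ν < 0 :=
        (lam_neg_iff ν).mpr (mul_neg_of_pos_of_neg (by linarith) (by linarith))
      rw [hcount ν, if_neg (not_lt.mpr hA.le), if_neg (hBnot ν), if_pos hC]
  · -- index 0
    intro ν hν
    rcases hν with hν | hν
    · obtain ⟨h1, h2⟩ := hν
      have hA : 0 < ν ^ 2 - 2 * γ * ν + ω := by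
        rw [hl0 ν]; exact mul_pos_of_neg_of_neg (by linarith) (by linarith)
      have e1 : ν ^ 2 < νM ^ 2 := pow_lt_pow_left₀ h2 h1 two_ne_zero
      have hC : 0 < lamM ω γ ν :=
        (lam_pos_iff ν).mpr (mul_pos_of_neg_of_neg (by linarith) (by linarith))
      rw [hcount ν, if_neg (not_lt.mpr hA.le), if_neg (hBnot ν),
        if_neg (not_lt.mpr hC.le)]
    · have h1 : νP < ν := hν
      have hν0 : 0 < ν := by linarith
      have hA : 0 < ν ^ 2 - 2 * γ * ν + ω := by
        rw [hl0 ν]; exact mul_pos (by linarith) (by linarith)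
      have e1 : νP ^ 2 < ν ^ 2 := pow_lt_pow_left₀ h1 hνP0.le two_ne_zero
      have hC : 0 < lamM ω γ ν :=
        (lam_pos_iff ν).mpr (mul_pos (by linarith) (by linarith))
      rw [hcount ν, if_neg (not_lt.mpr hA.le), if_neg (hBnot ν),
        if_neg (not_lt.mpr hC.le)]
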